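/- Let d ≥ 1, let ω ∈ ℝ^d, and let a ∈ {1,…,d} be an index with ω_a ≠ 0. Let f be a symmetric real d×d matrix and let v be an arbitrary real d×d matrix such that f_{ml} ω_n + f_{nl} ω_m − f_{mn} ω_l = v_{ml} ω_n + v_{nl} ω_m for all indices m, n, l ∈ {1,…,d}. Then f_{mn} = ω_m u_n + ω_n u_m for all m, n, where u ∈ ℝ^d is the vector with components u_m = (v_{am} − v_{ma})/ω_a + (v_{aa}/ω_a²) ω_m. -/

import Mathlib

/-- Linear-algebra core of the kernel computation for the principal symbol of the
normal operator of the linearized geodesic X-ray transform: a symmetric matrix `f`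
solving `f_{ml} ω_n + f_{nl} ω_m − f_{mn} ω_l = v_{ml} ω_n + v_{nl} ω_m` for all
indices is of potential form `f_{mn} = ω_m u_n + ω_n u_m`. -/
theorem kernel_solution_is_potential
    (d : ℕ) (hd : 1 ≤ d) (ω : Fin d → ℝ) (a : Fin d) (ha : ω a ≠ 0)
    (f v : Matrix (Fin d) (Fin d) ℝ) (hf : f.IsSymm)
    (heq : ∀ m n l, f m l * ω n + f n l * ω m - f m n * ω l
      = v m l * ω n + v n l * ω m) :
    ∀ m n, f m n = ω m * ((v a n - v n a) / ω a + v a a / (ω a) ^ 2 * ω n)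
      + ω n * ((v a m - v m a) / ω a + v a a / (ω a) ^ 2 * ω m) := by
  have hs : ∀ i j, f i j = f j i := fun i j => hf.apply j i
  -- f a a = 2 v a a
  have h1 : f a a = 2 * v a a := by
    have := heq a a a
    have h := mul_right_cancel₀ ha (by linarith : f a a * ω a = (2 * v a a) * ω a)
    exact h
  -- v m a * ω a = v a a * ω m
  have h2 : ∀ m, v m a * ω a = v a a * ω m := by
    intro m
    have := heq m a a
    rw [h1] at this
    linarith
  -- f a m * ω a = v a m * ω a + v a a * ω m
  have h3 : ∀ m, f a m * ω a = v a m * ω a + v a a * ω m := by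
    intro m
    have h := heq a a m
    rw [h1] at h
    have h2m := h2 m
    linarith
  intro m n
  have hk := heq m n a
  have h3m := h3 m
  have h3n := h3 n
  have h2m := h2 m
  have h2n := h2 n
  rw [hs m a] at hk
  rw [hs n a] at hk
  field_simp
  ring_nf
  linear_combination (-(ω a)) * hk + (ω n) * h3m + (ω m) * h3n
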